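/- Let Γ be a group that has a subgroup of finite index isomorphic to F_k × ℤ for some k ≥ 2, where F_k is the free group on k generators. Then Γ has a normal subgroup that is infinite cyclic (isomorphic to ℤ). -/

import Mathlib

open FreeGroup

section FreeGroupLemmas

variable {α : Type*} [DecidableEq α]

/-- The no-cancellation relation on letters. -/
private def RR : (α × Bool) → (α × Bool) → Prop := fun p q => ¬(p.1 = q.1 ∧ p.2 = !q.2)

private lemma exists_decomp_of_not_chain' :
    ∀ L : List (α × Bool), ¬ List.IsChain (RR (α := α)) L →
      ∃ (L₁ : List (α × Bool)) (x : α) (b : Bool) (L₂ : List (α × Bool)),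
        L = L₁ ++ (x, b) :: (x, !b) :: L₂ := by
  intro L
  induction L with
  | nil => intro h; exact absurd List.isChain_nil h
  | cons p t ih =>
    cases t with
    | nil => intro h; exact absurd (List.isChain_singleton p) h
    | cons q t2 =>
      intro h
      rw [List.isChain_cons_cons] at h
      by_cases hpq : RR p q
      · have h2 : ¬ List.IsChain (RR (α := α)) (q :: t2) := fun hh => h ⟨hpq, hh⟩
        obtain ⟨L₁, x, b, L₂, he⟩ := ih h2
        exact ⟨p :: L₁, x, b, L₂, by simp [he]⟩
      · obtain ⟨h1, h2⟩ := not_not.mp hpq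
        refine ⟨[], p.1, p.2, t2, ?_⟩
        have hq : q = (p.1, !p.2) := by
          apply Prod.ext
          · exact h1.symm
          · cases hb : p.2 <;> cases hb' : q.2 <;> simp_all
        simp [← hq]

private lemma fg_chain'_toWord (w : FreeGroup α) :
    List.IsChain (RR (α := α)) w.toWord := by
  by_contra hc
  obtain ⟨L₁, x, b, L₂, he⟩ := exists_decomp_of_not_chain' _ hc
  have hred : FreeGroup.reduce (α := α) w.toWord = L₁ ++ (x, b) :: (x, !b) :: L₂ := by
    rw [FreeGroup.reduce_toWord]; exact he
  exact FreeGroup.reduce.not hred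

private lemma reduce_eq_self_of_chain' :
    ∀ L : List (α × Bool), List.IsChain (RR (α := α)) L → FreeGroup.reduce L = L := by
  intro L
  induction L with
  | nil => intro _; rfl
  | cons x t ih =>
    intro h
    have ht : FreeGroup.reduce t = t := ih (List.isChain_cons.mp h).2
    rw [FreeGroup.reduce.cons, ht]
    cases t with
    | nil => rfl
    | cons q t2 =>
      have hxq : RR x q := (List.isChain_cons_cons.mp h).1
      simp only []
      rw [if_neg hxq]

private lemma toWord_mk_of_chain' (L : List (α × Bool))
    (h : List.IsChain (RR (α := α)) L) : (FreeGroup.mk L).toWord = L := by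
  rw [FreeGroup.toWord_mk, reduce_eq_self_of_chain' _ h]

private lemma toWord_inv_cancel {a : α} {t : List (α × Bool)} (w : FreeGroup α)
    (hw : w.toWord = (a, true) :: t) : ((of a)⁻¹ * w).toWord = t := by
  have hred : FreeGroup.reduce ((a, true) :: t) = (a, true) :: t := by
    rw [← hw]; exact FreeGroup.reduce_toWord w
  have hinv : (of a)⁻¹ = FreeGroup.mk [(a, false)] := by
    rw [FreeGroup.of, FreeGroup.inv_mk]
    simp [FreeGroup.invRev]
  have h1 : (of a)⁻¹ * w = FreeGroup.mk ((a, false) :: (a, true) :: t) := by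
    conv_lhs => rw [← FreeGroup.mk_toWord (x := w), hw, hinv, FreeGroup.mul_mk]
    rfl
  rw [h1, FreeGroup.toWord_mk, FreeGroup.reduce.cons, hred]
  simp

private lemma toWord_mul_cancel {a : α} {t : List (α × Bool)} (w : FreeGroup α)
    (hw : w.toWord = (a, false) :: t) : (of a * w).toWord = t := by
  have hred : FreeGroup.reduce ((a, false) :: t) = (a, false) :: t := by
    rw [← hw]; exact FreeGroup.reduce_toWord w
  have h1 : of a * w = FreeGroup.mk ((a, true) :: (a, false) :: t) := by
    conv_lhs => rw [← FreeGroup.mk_toWord (x := w), hw, FreeGroup.of, FreeGroup.mul_mk]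
    rfl
  rw [h1, FreeGroup.toWord_mk, FreeGroup.reduce.cons, hred]
  simp

private lemma chain'_replicate_RR (m : ℕ) (a : α) :
    List.IsChain (RR (α := α)) (List.replicate m (a, true)) := by
  induction m with
  | zero => simp
  | succ n ihn =>
    rw [List.replicate_succ]
    cases n with
    | zero => simp [RR]
    | succ k =>
      rw [List.isChain_cons]
      refine ⟨?_, ihn⟩
      intro y hy
      rw [List.head?_replicate] at hy
      simp only [Nat.succ_ne_zero, if_neg] at hy
      have : y = (a, true) := by
        have h' : (a, true) = y := by simpa using hy
        exact h'.symm
      subst this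
      simp [RR]

private lemma toWord_pow_mul {a : α} {m : ℕ} (w : FreeGroup α)
    (hhead : ∀ p ∈ w.toWord.head?, p.1 ≠ a) :
    (of a ^ m * w).toWord = List.replicate m (a, true) ++ w.toWord := by
  have h1 : of a ^ m * w = FreeGroup.mk (List.replicate m (a, true) ++ w.toWord) := by
    conv_lhs => rw [← FreeGroup.mk_toWord (x := of a ^ m), FreeGroup.toWord_of_pow,
      ← FreeGroup.mk_toWord (x := w), FreeGroup.mul_mk]
  rw [h1]
  apply toWord_mk_of_chain'
  rw [List.isChain_append]
  refine ⟨chain'_replicate_RR m a, fg_chain'_toWord w, ?_⟩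
  intro x hx y hy
  rw [List.getLast?_replicate] at hx
  rcases Nat.eq_zero_or_pos m with hm | hm
  · subst hm; simp at hx
  · have hx' : x = (a, true) := by
      rw [if_neg (by omega)] at hx
      have h' : (a, true) = x := by simpa using hx
      exact h'.symm
    subst hx'
    intro hcon
    exact hhead y hy hcon.1.symm

private lemma red_eq_of_length_eq {L₁ L₂ : List (α × Bool)} (h : FreeGroup.Red L₁ L₂)
    (hl : L₁.length = L₂.length) : L₁ = L₂ := by
  rcases Relation.ReflTransGen.cases_head h with rfl | ⟨c, hstep, hred⟩
  · rfl
  · have h1 := hstep.length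
    have h2 := FreeGroup.Red.length_le hred
    omega

/-- Centralizer of a positive power of a generator consists of powers of the generator. -/
private lemma mem_zpowers_of_commute_pow {a : α} {m : ℕ} (hm : 0 < m) (w : FreeGroup α)
    (hcomm : Commute w (of a ^ m)) : w ∈ Subgroup.zpowers (of a) := by
  suffices h : ∀ n (w : FreeGroup α), w.norm = n → Commute w (of a ^ m) →
      w ∈ Subgroup.zpowers (of a) from h _ w rfl hcomm
  clear hcomm w
  intro n
  induction n using Nat.strong_induction_on with
  | _ n ih =>
    intro w hn hcomm
    match hL : w.toWord with
    | [] =>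
      have : w = 1 := FreeGroup.toWord_eq_nil_iff.mp hL
      exact this ▸ Subgroup.one_mem _
    | (c, s) :: t =>
      have hca : c = a := by
        by_contra hc
        have hhead : ∀ p ∈ w.toWord.head?, p.1 ≠ a := by
          intro p hp
          rw [hL] at hp
          simp at hp
          subst hp
          exact hc
        have h2 : (of a ^ m * w).toWord = List.replicate m (a, true) ++ w.toWord :=
          toWord_pow_mul w hhead
        have h3 : (w * of a ^ m).toWord = List.replicate m (a, true) ++ w.toWord := by
          rw [hcomm]; exact h2
        have h4 : w * of a ^ m = FreeGroup.mk (w.toWord ++ List.replicate m (a, true)) := by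
          conv_lhs => rw [← FreeGroup.mk_toWord (x := w),
            ← FreeGroup.mk_toWord (x := of a ^ m), FreeGroup.toWord_of_pow, FreeGroup.mul_mk]
        have h5 : FreeGroup.reduce (w.toWord ++ List.replicate m (a, true)) =
            List.replicate m (a, true) ++ w.toWord := by
          rw [← FreeGroup.toWord_mk, ← h4, h3]
        have h6 : FreeGroup.Red (w.toWord ++ List.replicate m (a, true))
            (List.replicate m (a, true) ++ w.toWord) := by
          rw [← h5]; exact FreeGroup.reduce.red
        have h7 : w.toWord ++ List.replicate m (a, true) =
            List.replicate m (a, true) ++ w.toWord :=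
          red_eq_of_length_eq h6 (by simp [Nat.add_comm])
        have h8 := congrArg List.head? h7
        rw [hL] at h8
        have hmpos : List.replicate m (a, true) = (a, true) :: List.replicate (m - 1) (a, true) := by
          cases m with
          | zero => omega
          | succ k => simp [List.replicate_succ]
        rw [hmpos] at h8
        simp at h8
        first
          | exact hc h8
          | exact hc h8.1
          | exact hc h8.1.1
      subst hca
      have hone : Commute (of c) (of c ^ m) := (Commute.refl (of c)).pow_right m
      cases s with
      | true =>
        set w' := (of c)⁻¹ * w with hw'
        have htw' : w'.toWord = t := toWord_inv_cancel w hL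
        have hlen : w'.norm < n := by
          have : w.norm = t.length + 1 := by
            unfold FreeGroup.norm
            rw [hL]; rfl
          have h2 : w'.norm = t.length := by
            unfold FreeGroup.norm
            rw [htw']
          omega
        have hcomm' : Commute w' (of c ^ m) := Commute.mul_left hone.inv_left hcomm
        have hmem := ih w'.norm hlen w' rfl hcomm'
        have : w = of c * w' := by rw [hw', mul_inv_cancel_left]
        rw [this]
        exact Subgroup.mul_mem _ (Subgroup.mem_zpowers _) hmem
      | false =>
        set w' := of c * w with hw'
        have htw' : w'.toWord = t := toWord_mul_cancel w hL
        have hlen : w'.norm < n := by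
          have : w.norm = t.length + 1 := by
            unfold FreeGroup.norm
            rw [hL]; rfl
          have h2 : w'.norm = t.length := by
            unfold FreeGroup.norm
            rw [htw']
          omega
        have hcomm' : Commute w' (of c ^ m) := Commute.mul_left hone hcomm
        have hmem := ih w'.norm hlen w' rfl hcomm'
        have : w = (of c)⁻¹ * w' := by rw [hw', inv_mul_cancel_left]
        rw [this]
        exact Subgroup.mul_mem _ (Subgroup.inv_mem _ (Subgroup.mem_zpowers _)) hmem

/-- If an element commutes with positive powers of two distinct generators, it is trivial. -/
private lemma eq_one_of_commute_two_pows {a b : α} (hab : a ≠ b) {m n : ℕ}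
    (hm : 0 < m) (hn : 0 < n) (g : FreeGroup α)
    (h1 : Commute g (of a ^ m)) (h2 : Commute g (of b ^ n)) : g = 1 := by
  obtain ⟨i, hi'⟩ := mem_zpowers_of_commute_pow hm g h1
  obtain ⟨j, hj'⟩ := mem_zpowers_of_commute_pow hn g h2
  have hi : of a ^ i = g := hi'
  have hj : of b ^ j = g := hj'
  let φ : FreeGroup α →* Multiplicative ℤ :=
    FreeGroup.lift (fun x => if x = a then Multiplicative.ofAdd 1 else 1)
  have ha : φ (of a) = Multiplicative.ofAdd 1 := by simp [φ, FreeGroup.lift_apply_of]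
  have hb : φ (of b) = 1 := by simp [φ, FreeGroup.lift_apply_of, hab.symm]
  have e1 : φ g = Multiplicative.ofAdd i := by
    rw [← hi, map_zpow, ha, ← ofAdd_zsmul]
    simp
  have e2 : φ g = 1 := by rw [← hj, map_zpow, hb, one_zpow]
  have hi0 : i = 0 := by
    have := e1.symm.trans e2
    simpa using this
  rw [← hi, hi0, zpow_zero]

end FreeGroupLemmas

/-- A nontrivial subgroup of `Multiplicative ℤ` is isomorphic to `Multiplicative ℤ`. -/
private lemma nontrivial_subgroup_int_iso (S : Subgroup (Multiplicative ℤ))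
    (x : Multiplicative ℤ) (hx : x ∈ S) (hx1 : x ≠ 1) :
    Nonempty (S ≃* Multiplicative ℤ) := by
  obtain ⟨g, hg⟩ := IsCyclic.exists_generator (α := S)
  have hg1 : Multiplicative.toAdd (g : Multiplicative ℤ) ≠ 0 := by
    intro h
    obtain ⟨i, hi⟩ := hg ⟨x, hx⟩
    apply hx1
    have := congrArg Subtype.val hi
    push_cast at this
    rw [← this]
    have hgone : (g : Multiplicative ℤ) = 1 := by
      have := congrArg Multiplicative.ofAdd h
      simpa using this
    rw [hgone, one_zpow]
  let ψ : Multiplicative ℤ →* S := zpowersHom S g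
  have hinj : Function.Injective ψ := by
    rw [injective_iff_map_eq_one]
    intro y hy
    have h1 : (g : Multiplicative ℤ) ^ (Multiplicative.toAdd y) = 1 := by
      have := congrArg Subtype.val hy
      push_cast at this
      simpa [ψ, zpowersHom_apply] using this
    have h2 : (Multiplicative.toAdd y) • Multiplicative.toAdd (g : Multiplicative ℤ) = 0 := by
      have := congrArg Multiplicative.toAdd h1
      simpa [toAdd_zpow] using this
    rw [smul_eq_mul, mul_eq_zero] at h2
    rcases h2 with h2 | h2
    · have := congrArg Multiplicative.ofAdd h2
      simpa using this
    · exact absurd h2 hg1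
  have hsurj : Function.Surjective ψ := by
    intro s
    obtain ⟨i, hi⟩ := hg s
    exact ⟨Multiplicative.ofAdd i, by simpa [ψ, zpowersHom_apply] using hi⟩
  exact ⟨(MulEquiv.ofBijective ψ ⟨hinj, hsurj⟩).symm⟩

theorem stmt_13 (Γ : Type*) [Group Γ] (k : ℕ) (hk : 2 ≤ k)
    (H : Subgroup Γ) (hH : H.FiniteIndex)
    (hiso : Nonempty (H ≃* (FreeGroup (Fin k) × Multiplicative ℤ))) :
    ∃ N : Subgroup Γ, N.Normal ∧ Nonempty (N ≃* Multiplicative ℤ) := by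
  obtain ⟨e⟩ := hiso
  haveI := hH
  set G := FreeGroup (Fin k) × Multiplicative ℤ with hG
  set N : Subgroup Γ := H.normalCore with hN
  have hNH : N ≤ H := H.normalCore_le
  have hNnormal : N.Normal := H.normalCore_normal
  have hNfin : N.FiniteIndex := Subgroup.finiteIndex_normalCore H
  set S : Subgroup H := N.subgroupOf H with hS
  have hSidx : S.index ≠ 0 := by
    intro h0
    have := Subgroup.relIndex_mul_index hNH
    have hrel : N.relIndex H = S.index := rfl
    rw [← hrel] at h0
    rw [h0, zero_mul] at this
    exact hNfin.index_ne_zero this.symm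
  set K : Subgroup G := S.map e.toMonoidHom with hK
  have hKidx : K.index ≠ 0 := by
    have hker : e.toMonoidHom.ker = ⊥ := (MonoidHom.ker_eq_bot_iff _).mpr e.injective
    have : K.index = S.index := Subgroup.index_map_eq S e.surjective (hker ▸ bot_le)
    rw [this]; exact hSidx
  have hmemK : ∀ g : G, g ∈ K ↔ ((e.symm g : H) : Γ) ∈ N := by
    intro g
    rw [hK, Subgroup.mem_map_equiv]
    rfl
  -- the two generators
  set a : Fin k := ⟨0, by omega⟩ with ha
  set b : Fin k := ⟨1, by omega⟩ with hb
  have hab : a ≠ b := by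
    intro h
    have := congrArg Fin.val h
    simp [ha, hb] at this
  -- powers of generators lying in K
  obtain ⟨m, hm, -, hxm⟩ := Subgroup.exists_pow_mem_of_index_ne_zero hKidx (of a, 1)
  obtain ⟨n, hn, -, hyn⟩ := Subgroup.exists_pow_mem_of_index_ne_zero hKidx (of b, 1)
  have hxm' : ((of a ^ m, 1) : G) ∈ K := by
    have : ((of a, 1) : G) ^ m = (of a ^ m, 1) := by
      simp [Prod.pow_def]
    rwa [this] at hxm
  have hyn' : ((of b ^ n, 1) : G) ∈ K := by
    have : ((of b, 1) : G) ^ n = (of b ^ n, 1) := by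
      simp [Prod.pow_def]
    rwa [this] at hyn
  -- the candidate normal subgroup
  set Z : Subgroup Γ := Subgroup.centralizer (N : Set Γ) ⊓ N with hZ
  have hZN : Z ≤ N := inf_le_right
  have hZH : Z ≤ H := hZN.trans hNH
  have hZnormal : Z.Normal := by
    constructor
    intro z hz γ
    rw [hZ, Subgroup.mem_inf] at hz ⊢
    obtain ⟨hzc, hzN⟩ := hz
    rw [Subgroup.mem_centralizer_iff] at hzc
    refine ⟨?_, hNnormal.conj_mem z hzN γ⟩
    · rw [Subgroup.mem_centralizer_iff]
      intro h hh
      have hh' : γ⁻¹ * h * γ ∈ N := by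
        have := hNnormal.conj_mem h hh γ⁻¹
        simpa using this
      have hcz := hzc _ hh'
      -- hcz : (γ⁻¹ * h * γ) * z = z * (γ⁻¹ * h * γ)
      have : γ * ((γ⁻¹ * h * γ) * z) * γ⁻¹ = γ * (z * (γ⁻¹ * h * γ)) * γ⁻¹ := by
        rw [hcz]
      calc h * (γ * z * γ⁻¹) = γ * ((γ⁻¹ * h * γ) * z) * γ⁻¹ := by group
        _ = γ * (z * (γ⁻¹ * h * γ)) * γ⁻¹ := this
        _ = γ * z * γ⁻¹ * h := by group
  refine ⟨Z, hZnormal, ?_⟩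
  -- the homomorphism to Multiplicative ℤ
  let ι : Z →* H := Subgroup.inclusion hZH
  let f : Z →* Multiplicative ℤ :=
    (MonoidHom.snd (FreeGroup (Fin k)) (Multiplicative ℤ)).comp (e.toMonoidHom.comp ι)
  -- commuting transfer
  have hcommK : ∀ z : Z, ∀ g ∈ K, g * (e (ι z)) = (e (ι z)) * g := by
    intro z g hg
    have hgN : ((e.symm g : H) : Γ) ∈ N := (hmemK g).mp hg
    have hzc := (Subgroup.mem_inf.mp z.2).1
    rw [Subgroup.mem_centralizer_iff] at hzc
    have hcz : ((e.symm g : H) : Γ) * (z : Γ) = (z : Γ) * ((e.symm g : H) : Γ) :=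
      hzc _ hgN
    have hH' : (e.symm g) * (ι z) = (ι z) * (e.symm g) := by
      apply Subtype.ext
      push_cast
      simpa [ι, Subgroup.coe_inclusion] using hcz
    have := congrArg e hH'
    rw [_root_.map_mul, _root_.map_mul, e.apply_symm_apply] at this
    exact this
  -- injectivity of f
  have hfinj : Function.Injective f := by
    rw [injective_iff_map_eq_one]
    intro z hfz
    have hu1 : (e (ι z)).1 = 1 := by
      have hcx := hcommK z _ hxm'
      have hcy := hcommK z _ hyn'
      have hcx1 : of a ^ m * (e (ι z)).1 = (e (ι z)).1 * of a ^ m := by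
        have := congrArg Prod.fst hcx
        exact this
      have hcy1 : of b ^ n * (e (ι z)).1 = (e (ι z)).1 * of b ^ n := by
        have := congrArg Prod.fst hcy
        exact this
      exact eq_one_of_commute_two_pows hab hm hn _ hcx1.symm hcy1.symm
    have hu2 : (e (ι z)).2 = 1 := hfz
    have hu : e (ι z) = 1 := by
      apply Prod.ext <;> assumption
    have : ι z = 1 := e.injective (by simpa using hu)
    have hz1 : (z : Γ) = 1 := by
      have := congrArg (Subtype.val) this
      simpa [ι, Subgroup.coe_inclusion] using this
    exact Subtype.ext hz1
  -- a nontrivial element of the range of f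
  obtain ⟨d, hd, -, htd⟩ := Subgroup.exists_pow_mem_of_index_ne_zero hKidx
    ((1, Multiplicative.ofAdd 1) : G)
  have htd' : ((1, Multiplicative.ofAdd (d : ℤ)) : G) ∈ K := by
    have : ((1, Multiplicative.ofAdd 1) : G) ^ d = (1, Multiplicative.ofAdd (d : ℤ)) := by
      simp [Prod.pow_def, ← ofAdd_nsmul]
    rwa [this] at htd
  set t₀ : G := (1, Multiplicative.ofAdd (d : ℤ)) with ht₀
  set h₀ : H := e.symm t₀ with hh₀
  have hz₀N : ((h₀ : H) : Γ) ∈ N := (hmemK t₀).mp htd'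
  have hz₀c : ((h₀ : H) : Γ) ∈ Subgroup.centralizer (N : Set Γ) := by
    rw [Subgroup.mem_centralizer_iff]
    intro x hxN
    have hxH : x ∈ H := hNH hxN
    have hcomm : (⟨x, hxH⟩ : H) * h₀ = h₀ * ⟨x, hxH⟩ := by
      apply e.injective
      rw [_root_.map_mul, _root_.map_mul, hh₀, e.apply_symm_apply]
      apply Prod.ext
      · simp [ht₀]
      · simp [ht₀, mul_comm]
    have := congrArg (Subtype.val) hcomm
    push_cast at this
    exact this
  set z₀ : Z := ⟨(h₀ : Γ), hz₀c, hz₀N⟩ with hz₀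
  have hfz₀ : f z₀ = Multiplicative.ofAdd (d : ℤ) := by
    have hι : ι z₀ = h₀ := by
      apply Subtype.ext
      simp [ι, hz₀, Subgroup.coe_inclusion]
    show (e (ι z₀)).2 = _
    rw [hι, hh₀, e.apply_symm_apply]
  have hfz₀ne : f z₀ ≠ 1 := by
    rw [hfz₀]
    intro hcon
    have := congrArg Multiplicative.toAdd hcon
    simp at this
    omega
  -- assemble the isomorphism
  have hiso1 : Z ≃* f.range := MonoidHom.ofInjective hfinj
  obtain ⟨hiso2⟩ := nontrivial_subgroup_int_iso f.range (f z₀) ⟨z₀, rfl⟩ hfz₀ne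
  exact ⟨hiso1.trans hiso2⟩
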